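/- Let α, ω, Ω ∈ ℝ and let r, θ : ℝ → (ℤ × ℤ → ℝ) have differentiable components with r_{i,j}(t) > 0 for all (i,j) and t. Suppose that for all (i,j) ∈ ℤ × ℤ and all t ∈ ℝ: r′_{i,j}(t) = α Σ_{(i′,j′)} (r_{i′,j′}(t) cos(θ_{i′,j′}(t) − θ_{i,j}(t)) − r_{i,j}(t)) + r_{i,j}(t)(1 − r_{i,j}(t)²) and θ′_{i,j}(t) = α Σ_{(i′,j′)} (r_{i′,j′}(t)/r_{i,j}(t)) sin(θ_{i′,j′}(t) − θ_{i,j}(t)) + (ω − Ω), the sums being over the four nearest neighbours of (i,j). Then the complex-valued functions z_{i,j}(t) = r_{i,j}(t) · exp(i(Ωt + θ_{i,j}(t))) satisfy, for all (i,j) and t, the Lambda–Omega lattice system z′_{i,j}(t) = α Σ_{(i′,j′)} (z_{i′,j′}(t) − z_{i,j}(t)) + (1 + iω) z_{i,j}(t) − z_{i,j}(t)|z_{i,j}(t)|². -/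

import Mathlib

open Real

/-- The complex oscillator `z_{i,j}(t) = r_{i,j}(t) e^{i(Ω t + θ_{i,j}(t))}` built from the
polar variables. -/
noncomputable def zVar (r θ : ℝ → ℤ → ℤ → ℝ) (Ω : ℝ) (t : ℝ) (i j : ℤ) : ℂ :=
  (r t i j : ℂ) * Complex.exp (Complex.I * ((Ω : ℂ) * (t : ℂ) + (θ t i j : ℂ)))

/-- If the polar variables `(r, θ)` satisfy the polar form of the Lambda–Omega lattice
system, then `z_{i,j} = r_{i,j} e^{i(Ω t + θ_{i,j})}` satisfies the Lambda–Omega lattice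
dynamical system with discrete diffusive coupling. -/
theorem stmt17 (α ω Ω : ℝ) (r θ : ℝ → ℤ → ℤ → ℝ)
    (hrpos : ∀ (t : ℝ) (i j : ℤ), 0 < r t i j)
    (hr : ∀ (i j : ℤ) (t : ℝ), HasDerivAt (fun s => r s i j)
      (α * ((r t (i + 1) j * Real.cos (θ t (i + 1) j - θ t i j) - r t i j) +
            (r t (i - 1) j * Real.cos (θ t (i - 1) j - θ t i j) - r t i j) +
            (r t i (j + 1) * Real.cos (θ t i (j + 1) - θ t i j) - r t i j) +
            (r t i (j - 1) * Real.cos (θ t i (j - 1) - θ t i j) - r t i j)) +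
        r t i j * (1 - r t i j ^ 2)) t)
    (hθ : ∀ (i j : ℤ) (t : ℝ), HasDerivAt (fun s => θ s i j)
      (α * ((r t (i + 1) j / r t i j) * Real.sin (θ t (i + 1) j - θ t i j) +
            (r t (i - 1) j / r t i j) * Real.sin (θ t (i - 1) j - θ t i j) +
            (r t i (j + 1) / r t i j) * Real.sin (θ t i (j + 1) - θ t i j) +
            (r t i (j - 1) / r t i j) * Real.sin (θ t i (j - 1) - θ t i j)) +
        (ω - Ω)) t) :
    ∀ (i j : ℤ) (t : ℝ), HasDerivAt (fun s => zVar r θ Ω s i j)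
      ((α : ℂ) * ((zVar r θ Ω t (i + 1) j - zVar r θ Ω t i j) +
          (zVar r θ Ω t (i - 1) j - zVar r θ Ω t i j) +
          (zVar r θ Ω t i (j + 1) - zVar r θ Ω t i j) +
          (zVar r θ Ω t i (j - 1) - zVar r θ Ω t i j)) +
        (1 + Complex.I * (ω : ℂ)) * zVar r θ Ω t i j -
        zVar r θ Ω t i j * ((‖zVar r θ Ω t i j‖ : ℝ) : ℂ) ^ 2) t := by
  intro i j t
  set ri := r t i j with hri
  have hrij := hrpos t i j
  have hrR := (hr i j t).ofReal_comp
  have hθR := (hθ i j t).ofReal_comp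
  have hΩt : HasDerivAt (fun s : ℝ => (Ω : ℂ) * (s : ℂ)) (Ω : ℂ) t := by
    simpa using ((hasDerivAt_id t).ofReal_comp.const_mul (Ω : ℂ))
  have hφ := ((hΩt.add hθR).const_mul Complex.I)
  have hexp := hφ.cexp
  have hz := hrR.mul hexp
  have key : ∀ a b : ℤ, zVar r θ Ω t a b =
      (r t a b : ℂ) * (Complex.cos (θ t a b - θ t i j) + Complex.sin (θ t a b - θ t i j) * Complex.I)
        * Complex.exp (Complex.I * ((Ω : ℂ) * (t : ℂ) + (θ t i j : ℂ))) := by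
    intro a b
    rw [zVar, mul_assoc]
    congr 1
    rw [← Complex.exp_mul_I, ← Complex.exp_add]
    congr 1
    push_cast
    ring
  have habs : (‖zVar r θ Ω t i j‖ : ℝ) = ri := by
    rw [zVar, norm_mul, Complex.norm_real, Complex.norm_exp]
    simp [abs_of_pos hrij, hri]
  convert hz using 1
  case e'_4 => rfl
  case e'_8 => rfl
  rw [habs]
  simp only [key, sub_self, Complex.sin_zero, Complex.cos_zero]
  push_cast
  have hr0 : (ri : ℂ) ≠ 0 := by exact_mod_cast hrij.ne'
  simp only [Pi.add_apply, ← hri]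
  field_simp
  ring
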